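/- In a matrix algebra, the intersection of any family of 'corners' is a corner: for families of orthogonal projections (p_α) and (q_α) in M_n(ℂ), the intersection over α of the subspaces p_α M_n(ℂ) q_α equals (⋀ p_α) M_n(ℂ) (⋀ q_α), where ⋀ denotes the infimum of projections (projection onto the intersection of ranges). -/

import Mathlib

open Matrix

/-- A hermitian idempotent (orthogonal projection) in `M_n(ℂ)`. -/
def IsProjection {n : ℕ} (p : Matrix (Fin n) (Fin n) ℂ) : Prop :=
  p.IsHermitian ∧ p * p = p

/-- The corner `p M_n(ℂ) q`. -/
def corner {n : ℕ} (p q : Matrix (Fin n) (Fin n) ℂ) : Set (Matrix (Fin n) (Fin n) ℂ) :=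
  {y | ∃ x, y = p * x * q}

/-- A projection fixes vectors in its range. -/
lemma proj_fixes {n : ℕ} {p : Matrix (Fin n) (Fin n) ℂ} (hp : p * p = p)
    {v : Fin n → ℂ} (hv : v ∈ LinearMap.range p.mulVecLin) : p.mulVec v = v := by
  obtain ⟨w, rfl⟩ := hv
  simp only [mulVecLin_apply, mulVec_mulVec, hp]

lemma mem_range_proj_iff {n : ℕ} {p : Matrix (Fin n) (Fin n) ℂ} (hp : p * p = p)
    {v : Fin n → ℂ} : v ∈ LinearMap.range p.mulVecLin ↔ p.mulVec v = v :=
  ⟨proj_fixes hp, fun h => ⟨v, h⟩⟩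

/-- Matrix equation `p * A = A` via columns. -/
lemma mul_left_eq_iff_cols {n : ℕ} (p A : Matrix (Fin n) (Fin n) ℂ) :
    p * A = A ↔ ∀ j, p.mulVec (fun i => A i j) = fun i => A i j := by
  constructor
  · intro h j
    funext i
    have := congrFun (congrFun h i) j
    simpa [Matrix.mul_apply, Matrix.mulVec, dotProduct] using this
  · intro h
    ext i j
    have := congrFun (h j) i
    simpa [Matrix.mul_apply, Matrix.mulVec, dotProduct] using this

/-- If the range of projection `P` lies inside that of projection `p`, then `p * P = P`. -/
lemma mul_eq_of_range_le {n : ℕ} {p P : Matrix (Fin n) (Fin n) ℂ}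
    (hp : p * p = p) (hP : P * P = P)
    (h : LinearMap.range P.mulVecLin ≤ LinearMap.range p.mulVecLin) : p * P = P := by
  rw [mul_left_eq_iff_cols]
  intro j
  apply proj_fixes hp
  apply h
  rw [mem_range_proj_iff hP]
  funext i
  have hcol : (fun i => P i j) = P.mulVec (Pi.single j 1) := by
    rw [Matrix.mulVec_single]; funext i; simp
  rw [hcol, mulVec_mulVec, hP]
  simp [Matrix.mulVec_single]

/-- The intersection of any family of corners is a corner: it equals
`(⋀ p_α) M_n(ℂ) (⋀ q_α)`, where `⋀` denotes the orthogonal projection onto the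
intersection of ranges. -/
theorem iInter_corner_eq_corner_inf
    {n : ℕ} {ι : Type*} (p q : ι → Matrix (Fin n) (Fin n) ℂ)
    (hp : ∀ α, IsProjection (p α)) (hq : ∀ α, IsProjection (q α))
    (P Q : Matrix (Fin n) (Fin n) ℂ)
    (hP : IsProjection P) (hQ : IsProjection Q)
    (hPrange : LinearMap.range P.mulVecLin = ⨅ α, LinearMap.range (p α).mulVecLin)
    (hQrange : LinearMap.range Q.mulVecLin = ⨅ α, LinearMap.range (q α).mulVecLin) :
    ⋂ α, corner (p α) (q α) = corner P Q := by
  ext y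
  simp only [Set.mem_iInter]
  constructor
  · intro h
    -- from y ∈ corner (p α) (q α) we get p α * y * q α = y
    have hfix : ∀ α, p α * y * q α = y := by
      intro α
      obtain ⟨x, rfl⟩ := h α
      rw [← Matrix.mul_assoc, ← Matrix.mul_assoc, (hp α).2, Matrix.mul_assoc,
        Matrix.mul_assoc, (hq α).2, ← Matrix.mul_assoc]
    have hleft : ∀ α, p α * y = y := by
      intro α
      calc p α * y = p α * (p α * y * q α) := by rw [hfix α]
        _ = (p α * p α) * y * q α := by noncomm_ring
        _ = p α * y * q α := by rw [(hp α).2]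
        _ = y := hfix α
    have hright : ∀ α, y * q α = y := by
      intro α
      calc y * q α = (p α * y * q α) * q α := by rw [hfix α]
        _ = p α * y * (q α * q α) := by noncomm_ring
        _ = p α * y * q α := by rw [(hq α).2]
        _ = y := hfix α
    -- P * y = y
    have hPy : P * y = y := by
      rw [mul_left_eq_iff_cols]
      intro j
      apply proj_fixes hP.2
      rw [mem_range_proj_iff hP.2, ← mem_range_proj_iff hP.2, hPrange, Submodule.mem_iInf]
      intro α
      rw [mem_range_proj_iff (hp α).2]
      have := (mul_left_eq_iff_cols (p α) y).mp (hleft α)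
      exact this j
    -- y * Q = y, via conjugate transposes
    have hyQ : y * Q = y := by
      have hQyH : Q * yᴴ = yᴴ := by
        rw [mul_left_eq_iff_cols]
        intro j
        apply proj_fixes hQ.2
        rw [mem_range_proj_iff hQ.2, ← mem_range_proj_iff hQ.2, hQrange, Submodule.mem_iInf]
        intro α
        rw [mem_range_proj_iff (hq α).2]
        have hqyH : q α * yᴴ = yᴴ := by
          have := congrArg Matrix.conjTranspose (hright α)
          rwa [Matrix.conjTranspose_mul, (hq α).1.eq] at this
        exact (mul_left_eq_iff_cols (q α) yᴴ).mp hqyH j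
      have := congrArg Matrix.conjTranspose hQyH
      rwa [Matrix.conjTranspose_mul, Matrix.conjTranspose_conjTranspose, hQ.1.eq] at this
    exact ⟨y, by rw [hPy, hyQ]⟩
  · rintro ⟨x, rfl⟩ α
    have hpP : p α * P = P := by
      apply mul_eq_of_range_le (hp α).2 hP.2
      rw [hPrange]; exact iInf_le _ α
    have hqQ : q α * Q = Q := by
      apply mul_eq_of_range_le (hq α).2 hQ.2
      rw [hQrange]; exact iInf_le _ α
    have hQq : Q * q α = Q := by
      have := congrArg Matrix.conjTranspose hqQ
      rwa [Matrix.conjTranspose_mul, (hq α).1.eq, hQ.1.eq] at this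
    refine ⟨P * x * Q, ?_⟩
    calc P * x * Q = (p α * P) * x * (Q * q α) := by rw [hpP, hQq]
      _ = p α * (P * x * Q) * q α := by noncomm_ring
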